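/- Let L be a positive integer, let a, M be positive integers dividing L, let g ∈ ℂ^L generate a Gabor frame G(g,a,M), and let h ∈ ℂ^L. Then h is a dual window for g (i.e. f = Σ_{n=0}^{L/a−1} Σ_{m=0}^{M−1} ⟨f, M_{m/M}T_{na} h⟩ · (M_{m/M}T_{na} g) for all f ∈ ℂ^L) if and only if h satisfies the Wexler–Raz equations: (M/a)·⟨h, (e^{2πim·/a})·T_{nM} g⟩ = δ[n]δ[m] for all m = 0,…,a−1 and n = 0,…,L/M−1. -/

import Mathlib

/-- The Gabor atom `M_{m/M} T_n g` on `ℂ^L` (identified with `ZMod L → ℂ`):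
circular translation by `n` followed by modulation `e^{2πiml/M}`. -/
noncomputable def gaborAtom (L M : ℕ) [NeZero L] (g : ZMod L → ℂ) (m n : ℕ) :
    ZMod L → ℂ :=
  fun l => g (l - (n : ZMod L)) *
    Complex.exp (2 * Real.pi * Complex.I * (m : ℂ) * (l.val : ℂ) / (M : ℂ))

/-- The inner product `⟨f, g⟩ = ∑_{l=0}^{L-1} f[l]·conj(g[l])` on `ℂ^L`. -/
noncomputable def ipL (L : ℕ) [NeZero L] (f g : ZMod L → ℂ) : ℂ :=
  ∑ l : ZMod L, f l * star (g l)

noncomputable def ec (N : ℕ) (k : ℤ) : ℂ :=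
  Complex.exp (2 * Real.pi * Complex.I * (k : ℂ) / (N : ℂ))

lemma ec_add (N : ℕ) (k k' : ℤ) : ec N (k + k') = ec N k * ec N k' := by
  simp only [ec, ← Complex.exp_add]
  congr 1
  push_cast
  ring

lemma ec_mul_self (N : ℕ) (hN : N ≠ 0) (t : ℤ) : ec N ((N : ℤ) * t) = 1 := by
  have hN' : (N : ℂ) ≠ 0 := Nat.cast_ne_zero.mpr hN
  have : (2 * Real.pi * Complex.I * (((N : ℤ) * t : ℤ) : ℂ) / (N : ℂ)) = t * (2 * Real.pi * Complex.I) := by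
    field_simp
    push_cast
    ring
  rw [ec, this, Complex.exp_int_mul_two_pi_mul_I]

lemma ec_eq_of_dvd (N : ℕ) (hN : N ≠ 0) (k k' : ℤ) (h : (N : ℤ) ∣ k - k') :
    ec N k = ec N k' := by
  obtain ⟨t, ht⟩ := h
  have : k = k' + N * t := by linarith
  rw [this, ec_add, ec_mul_self N hN, mul_one]

lemma ec_rescale (L aa : ℕ) (hL : L ≠ 0) (haL : aa ∣ L) (k : ℤ) :
    ec aa k = ec L (((L / aa : ℕ) : ℤ) * k) := by
  have ha : aa ≠ 0 := by rintro rfl; exact hL (Nat.zero_dvd.mp haL)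
  obtain ⟨c, rfl⟩ := haL
  have hc : c ≠ 0 := by rintro rfl; simp at hL
  rw [Nat.mul_div_cancel_left c (Nat.pos_of_ne_zero ha)]
  rw [ec, ec]
  congr 1
  have haC : (aa : ℂ) ≠ 0 := Nat.cast_ne_zero.mpr ha
  have hcC : (c : ℂ) ≠ 0 := Nat.cast_ne_zero.mpr hc
  field_simp
  push_cast
  ring

lemma sum_val (L : ℕ) [NeZero L] (f : ℕ → ℂ) :
    ∑ l : ZMod L, f l.val = ∑ i ∈ Finset.range L, f i := by
  apply Finset.sum_nbij' (i := fun (l : ZMod L) => l.val) (j := fun (i : ℕ) => (i : ZMod L))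
  · intro l _; exact Finset.mem_range.mpr (ZMod.val_lt l)
  · intro i _; exact Finset.mem_univ _
  · intro l _; exact ZMod.natCast_zmod_val l
  · intro i hi; exact ZMod.val_cast_of_lt (Finset.mem_range.mp hi)
  · intro l _; rfl

lemma ec_pow (N : ℕ) (m : ℕ) (k : ℤ) : ec N ((m : ℤ) * k) = (ec N k) ^ m := by
  rw [ec, ec, ← Complex.exp_nat_mul]
  congr 1; push_cast; ring

lemma ec_eq_one_iff (N : ℕ) (hN : N ≠ 0) (k : ℤ) : ec N k = 1 ↔ (N : ℤ) ∣ k := by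
  constructor
  · intro hone
    rw [ec, Complex.exp_eq_one_iff] at hone
    obtain ⟨n, hn⟩ := hone
    have hπ : (Real.pi : ℂ) ≠ 0 := by exact_mod_cast Real.pi_ne_zero
    have hNc : (N : ℂ) ≠ 0 := Nat.cast_ne_zero.mpr hN
    have hk : (k : ℂ) = (n : ℂ) * (N : ℂ) := by
      field_simp at hn
      have h2 : (2 : ℂ) * Real.pi * Complex.I ≠ 0 := by
        simp [Complex.I_ne_zero, hπ]
      have : (2 : ℂ) * Real.pi * Complex.I * k = 2 * Real.pi * Complex.I * (n * N) := by
        linear_combination (2 * Real.pi * Complex.I) * hn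
      exact mul_left_cancel₀ h2 this
    have : k = n * N := by exact_mod_cast hk
    exact ⟨n, by linarith⟩
  · rintro ⟨t, rfl⟩
    exact ec_mul_self N hN t

lemma ec_sum (N : ℕ) (hN : N ≠ 0) (k : ℤ) :
    ∑ m ∈ Finset.range N, ec N ((m : ℤ) * k) = if (N : ℤ) ∣ k then (N : ℂ) else 0 := by
  by_cases hdvd : (N : ℤ) ∣ k
  · have h1 : ec N k = 1 := (ec_eq_one_iff N hN k).mpr hdvd
    simp [ec_pow, h1, hdvd]
  · have hne : ec N k ≠ 1 := fun hone => hdvd ((ec_eq_one_iff N hN k).mp hone)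
    simp only [ec_pow, hdvd, if_false]
    rw [geom_sum_eq hne]
    have : ec N k ^ N = 1 := by
      rw [← ec_pow]; exact ec_mul_self N hN k
    simp [this]

lemma val_add_dvd (L : ℕ) [NeZero L] (l : ZMod L) (c : ℕ) :
    (L : ℤ) ∣ (((l + (c : ZMod L)).val : ℤ) - ((l.val : ℤ) + c)) := by
  have hmod : (((l + (c : ZMod L)).val : ℤ)) ≡ ((l.val : ℤ) + c) [ZMOD L] :=
    (ZMod.intCast_eq_intCast_iff _ _ _).mp
      (by push_cast; simp [ZMod.natCast_zmod_val])
  exact hmod.symm.dvd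

lemma ec_val_add (L : ℕ) [NeZero L] (d : ℕ) (hdL : d ∣ L) (hd0 : d ≠ 0) (c : ℕ)
    (m : ℤ) (l : ZMod L) :
    ec d (m * (((l + (c : ZMod L)).val : ℤ))) = ec d (m * (l.val : ℤ)) * ec d (m * c) := by
  rw [← ec_add]
  apply ec_eq_of_dvd d hd0
  have h1 := val_add_dvd L l c
  have hdL' : (d : ℤ) ∣ (L : ℤ) := Int.natCast_dvd_natCast.mpr hdL
  have heq : m * (((l + (c : ZMod L)).val : ℤ)) - (m * (l.val : ℤ) + m * c)
      = m * ((((l + (c : ZMod L)).val : ℤ)) - ((l.val : ℤ) + c)) := by ring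
  rw [heq]
  exact Dvd.dvd.mul_left (hdL'.trans h1) m

lemma sum_ec_val (L : ℕ) [NeZero L] (d : ℕ) (hd : d ∣ L) (c : ℤ) :
    ∑ l : ZMod L, ec d (c * (l.val : ℤ)) = if (d : ℤ) ∣ c then (L : ℂ) else 0 := by
  have hL : L ≠ 0 := NeZero.ne L
  have hd0 : d ≠ 0 := by rintro rfl; exact hL (Nat.zero_dvd.mp hd)
  have hq0 : L / d ≠ 0 := by
    intro hq
    exact hL (by rw [← Nat.div_mul_cancel hd, hq, zero_mul])
  calc ∑ l : ZMod L, ec d (c * (l.val : ℤ))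
      = ∑ l : ZMod L, ec L (((l.val : ℕ) : ℤ) * (((L / d : ℕ) : ℤ) * c)) := by
        apply Finset.sum_congr rfl
        intro l _
        rw [ec_rescale L d hL hd]
        congr 1
        ring
    _ = ∑ i ∈ Finset.range L, ec L ((i : ℤ) * (((L / d : ℕ) : ℤ) * c)) :=
        sum_val L (fun i => ec L ((i : ℤ) * (((L / d : ℕ) : ℤ) * c)))
    _ = if (L : ℤ) ∣ (((L / d : ℕ) : ℤ) * c) then (L : ℂ) else 0 :=
        ec_sum L hL _
    _ = if (d : ℤ) ∣ c then (L : ℂ) else 0 := by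
        congr 1
        simp only [eq_iff_iff]
        constructor
        · intro hdvd
          have hL' : (L : ℤ) = ((L / d : ℕ) : ℤ) * (d : ℤ) := by
            exact_mod_cast (Nat.div_mul_cancel hd).symm
          rw [hL'] at hdvd
          exact (mul_dvd_mul_iff_left (by exact_mod_cast hq0 : ((L / d : ℕ) : ℤ) ≠ 0)).mp hdvd
        · intro hdvd
          have hL' : (L : ℤ) = ((L / d : ℕ) : ℤ) * (d : ℤ) := by
            exact_mod_cast (Nat.div_mul_cancel hd).symm
          rw [hL']
          exact mul_dvd_mul_left _ hdvd

lemma ec_zero (N : ℕ) : ec N 0 = 1 := by simp [ec]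

lemma ec_star (N : ℕ) (k : ℤ) : star (ec N k) = ec N (-k) := by
  rw [ec, ec, Complex.star_def, ← Complex.exp_conj]
  congr 1
  simp [Complex.conj_I, map_ofNat]

lemma dvd_val_sub_iff (L : ℕ) [NeZero L] (d : ℕ) (hd : d ∣ L) (l l' : ZMod L) :
    (d : ℤ) ∣ ((l.val : ℤ) - (l'.val : ℤ)) ↔ (d : ℤ) ∣ ((l - l').val : ℤ) := by
  have hmod : (((l - l').val : ℤ)) ≡ ((l.val : ℤ) - (l'.val : ℤ)) [ZMOD (L : ℕ)] :=
    (ZMod.intCast_eq_intCast_iff (((l - l').val : ℤ)) ((l.val : ℤ) - (l'.val : ℤ)) L).mp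
      (by push_cast; simp [ZMod.natCast_val, ZMod.intCast_zmod_cast])
  have hLdvd : (L : ℤ) ∣ ((l.val : ℤ) - (l'.val : ℤ)) - (((l - l').val : ℤ)) := hmod.dvd
  have hdL : (d : ℤ) ∣ (L : ℤ) := Int.natCast_dvd_natCast.mpr hd
  constructor
  · intro h
    have := dvd_sub h (hdL.trans hLdvd)
    simpa using this
  · intro h
    have := dvd_add h (hdL.trans hLdvd)
    simpa using this

lemma coset_sum (L : ℕ) [NeZero L] (d : ℕ) (hd : d ∣ L) (hd0 : d ≠ 0) (l : ZMod L)
    (F : ZMod L → ℂ) :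
    ∑ l' : ZMod L, (if (d : ℤ) ∣ ((l.val : ℤ) - (l'.val : ℤ)) then F l' else 0)
      = ∑ n : Fin (L / d), F (l - ((n : ℕ) * d : ℕ)) := by
  have hL : L ≠ 0 := NeZero.ne L
  rw [← Finset.sum_filter]
  apply Finset.sum_nbij' (i := fun l' => (⟨(l - l').val / d, by
      exact Nat.div_lt_div_of_lt_of_dvd hd (ZMod.val_lt _)⟩ : Fin (L / d)))
    (j := fun n : Fin (L / d) => l - ((n : ℕ) * d : ℕ))
  · intro l' _; exact Finset.mem_univ _
  · intro n _
    simp only [Finset.mem_filter, Finset.mem_univ, true_and]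
    rw [dvd_val_sub_iff L d hd]
    have : l - (l - ((n : ℕ) * d : ℕ)) = (((n : ℕ) * d : ℕ) : ZMod L) := by ring
    rw [this]
    have hlt : (n : ℕ) * d < L := by
      calc (n : ℕ) * d < (L / d) * d := by
            exact (Nat.mul_lt_mul_right (Nat.pos_of_ne_zero hd0)).mpr n.isLt
        _ = L := Nat.div_mul_cancel hd
    rw [ZMod.val_cast_of_lt hlt]
    exact Int.natCast_dvd_natCast.mpr ⟨(n : ℕ), by ring⟩
  · intro l' hl'
    simp only [Finset.mem_filter, Finset.mem_univ, true_and] at hl'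
    have hdvd : d ∣ (l - l').val := by
      have := (dvd_val_sub_iff L d hd l l').mp hl'
      exact_mod_cast this
    show l - _ = l'
    rw [Nat.div_mul_cancel hdvd, ZMod.natCast_val, ZMod.cast_id]
    ring
  · intro n _
    have : l - (l - ((n : ℕ) * d : ℕ)) = (((n : ℕ) * d : ℕ) : ZMod L) := by ring
    have hlt : (n : ℕ) * d < L := by
      calc (n : ℕ) * d < (L / d) * d := by
            exact (Nat.mul_lt_mul_right (Nat.pos_of_ne_zero hd0)).mpr n.isLt
        _ = L := Nat.div_mul_cancel hd
    apply Fin.ext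
    show (l - (l - ((n : ℕ) * d : ℕ))).val / d = (n : ℕ)
    rw [this, ZMod.val_cast_of_lt hlt, Nat.mul_div_cancel _ (Nat.pos_of_ne_zero hd0)]
  · intro l' hl'
    simp only [Finset.mem_filter, Finset.mem_univ, true_and] at hl'
    have hdvd : d ∣ (l - l').val := by
      have := (dvd_val_sub_iff L d hd l l').mp hl'
      exact_mod_cast this
    congr 1
    rw [Nat.div_mul_cancel hdvd, ZMod.natCast_val, ZMod.cast_id]
    ring

lemma gaborAtom_eq (L M : ℕ) [NeZero L] (g : ZMod L → ℂ) (m n : ℕ) (l : ZMod L) :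
    gaborAtom L M g m n l = g (l - (n : ZMod L)) * ec M ((m : ℤ) * (l.val : ℤ)) := by
  rw [gaborAtom, ec]
  congr 2
  push_cast
  ring

lemma exp_eq_ec (N m : ℕ) (v : ℕ) :
    Complex.exp (2 * Real.pi * Complex.I * (m : ℂ) * (v : ℂ) / (N : ℂ))
      = ec N ((m : ℤ) * (v : ℤ)) := by
  rw [ec]
  congr 1
  push_cast
  ring

lemma step1 (L a M : ℕ) [NeZero L] (g h : ZMod L → ℂ) :
    (∀ f : ZMod L → ℂ, ∀ l : ZMod L,
        f l = ∑ n : Fin (L / a), ∑ m : Fin M,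
          ipL L f (gaborAtom L M h m ((n : ℕ) * a)) *
            gaborAtom L M g m ((n : ℕ) * a) l)
    ↔ (∀ l₀ l : ZMod L, (if l = l₀ then (1 : ℂ) else 0)
        = ∑ n : Fin (L / a), ∑ m : Fin M,
            star (gaborAtom L M h m ((n : ℕ) * a) l₀) *
              gaborAtom L M g m ((n : ℕ) * a) l) := by
  constructor
  · intro H l₀ l
    have hip : ∀ w : ZMod L → ℂ,
        ipL L (fun x => if x = l₀ then (1 : ℂ) else 0) w = star (w l₀) := by
      intro w
      rw [ipL, Finset.sum_eq_single l₀]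
      · simp
      · intro b _ hb; simp [hb]
      · simp
    have hf := H (fun x => if x = l₀ then (1 : ℂ) else 0) l
    simp only [hip] at hf
    exact hf
  · intro H f l
    have key : ∀ l₀ : ZMod L, f l₀ * (if l = l₀ then (1 : ℂ) else 0)
        = ∑ n : Fin (L / a), ∑ m : Fin M,
            f l₀ * (star (gaborAtom L M h m ((n : ℕ) * a) l₀) *
              gaborAtom L M g m ((n : ℕ) * a) l) := by
      intro l₀
      rw [H l₀ l, Finset.mul_sum]
      exact Finset.sum_congr rfl fun n _ => Finset.mul_sum _ _ _
    calc f l = ∑ l₀ : ZMod L, f l₀ * (if l = l₀ then (1 : ℂ) else 0) := by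
          simp only [mul_ite, mul_one, mul_zero]
          rw [Finset.sum_ite_eq]
          simp
      _ = ∑ l₀ : ZMod L, ∑ n : Fin (L / a), ∑ m : Fin M,
            f l₀ * (star (gaborAtom L M h m ((n : ℕ) * a) l₀) *
              gaborAtom L M g m ((n : ℕ) * a) l) :=
          Finset.sum_congr rfl fun l₀ _ => key l₀
      _ = ∑ n : Fin (L / a), ∑ l₀ : ZMod L, ∑ m : Fin M,
            f l₀ * (star (gaborAtom L M h m ((n : ℕ) * a) l₀) *
              gaborAtom L M g m ((n : ℕ) * a) l) := Finset.sum_comm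
      _ = ∑ n : Fin (L / a), ∑ m : Fin M, ∑ l₀ : ZMod L,
            f l₀ * (star (gaborAtom L M h m ((n : ℕ) * a) l₀) *
              gaborAtom L M g m ((n : ℕ) * a) l) :=
          Finset.sum_congr rfl fun n _ => Finset.sum_comm
      _ = ∑ n : Fin (L / a), ∑ m : Fin M,
            ipL L f (gaborAtom L M h m ((n : ℕ) * a)) *
              gaborAtom L M g m ((n : ℕ) * a) l := by
          refine Finset.sum_congr rfl fun n _ => Finset.sum_congr rfl fun m _ => ?_
          rw [ipL, Finset.sum_mul]
          exact Finset.sum_congr rfl fun l₀ _ => by ring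

lemma inner_msum (L a M : ℕ) [NeZero L] (hM0 : M ≠ 0) (g h : ZMod L → ℂ)
    (l₀ l : ZMod L) (n : Fin (L / a)) :
    (∑ m : Fin M, star (gaborAtom L M h m ((n : ℕ) * a) l₀) *
        gaborAtom L M g m ((n : ℕ) * a) l)
      = (if (M : ℤ) ∣ ((l.val : ℤ) - (l₀.val : ℤ)) then (M : ℂ) else 0) *
          (star (h (l₀ - (((n : ℕ) * a : ℕ) : ZMod L))) *
            g (l - (((n : ℕ) * a : ℕ) : ZMod L))) := by
  have hterm : ∀ m : Fin M,
      star (gaborAtom L M h m ((n : ℕ) * a) l₀) * gaborAtom L M g m ((n : ℕ) * a) l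
      = (star (h (l₀ - (((n : ℕ) * a : ℕ) : ZMod L))) *
          g (l - (((n : ℕ) * a : ℕ) : ZMod L))) *
        ec M (((m : ℕ) : ℤ) * ((l.val : ℤ) - (l₀.val : ℤ))) := by
    intro m
    rw [gaborAtom_eq, gaborAtom_eq, star_mul', ec_star]
    have hcomb : ec M (-(((m : ℕ) : ℤ) * (l₀.val : ℤ))) * ec M (((m : ℕ) : ℤ) * (l.val : ℤ))
        = ec M (((m : ℕ) : ℤ) * ((l.val : ℤ) - (l₀.val : ℤ))) := by
      rw [← ec_add]; congr 1; ring
    rw [mul_mul_mul_comm, hcomb]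
  rw [Finset.sum_congr rfl fun m _ => hterm m, ← Finset.mul_sum]
  rw [Fin.sum_univ_eq_sum_range (fun i : ℕ => ec M ((i : ℤ) * ((l.val : ℤ) - (l₀.val : ℤ)))) M]
  rw [ec_sum M hM0]
  ring

lemma step2 (L a M : ℕ) [NeZero L] (hM0 : M ≠ 0) (hML : M ∣ L) (g h : ZMod L → ℂ) :
    (∀ l₀ l : ZMod L, (if l = l₀ then (1 : ℂ) else 0)
        = ∑ n : Fin (L / a), ∑ m : Fin M,
            star (gaborAtom L M h m ((n : ℕ) * a) l₀) *
              gaborAtom L M g m ((n : ℕ) * a) l)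
    ↔ (∀ l : ZMod L, ∀ j : ℕ, j < L / M →
        (M : ℂ) * ∑ n : Fin (L / a),
            star (h (l - ((j * M : ℕ) : ZMod L) - (((n : ℕ) * a : ℕ) : ZMod L))) *
              g (l - (((n : ℕ) * a : ℕ) : ZMod L))
          = if j = 0 then 1 else 0) := by
  have hL : L ≠ 0 := NeZero.ne L
  -- rewrite Cond0 using inner_msum
  have C0 : ∀ l₀ l : ZMod L,
      (∑ n : Fin (L / a), ∑ m : Fin M,
          star (gaborAtom L M h m ((n : ℕ) * a) l₀) *
            gaborAtom L M g m ((n : ℕ) * a) l)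
      = (if (M : ℤ) ∣ ((l.val : ℤ) - (l₀.val : ℤ)) then (M : ℂ) else 0) *
          ∑ n : Fin (L / a),
            star (h (l₀ - (((n : ℕ) * a : ℕ) : ZMod L))) *
              g (l - (((n : ℕ) * a : ℕ) : ZMod L)) := by
    intro l₀ l
    rw [Finset.mul_sum]
    exact Finset.sum_congr rfl fun n _ => inner_msum L a M hM0 g h l₀ l n
  have fact1 : ∀ j : ℕ, j < L / M → j * M < L := by
    intro j hj
    calc j * M < (L / M) * M := (Nat.mul_lt_mul_right (Nat.pos_of_ne_zero hM0)).mpr hj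
      _ = L := Nat.div_mul_cancel hML
  have fact2 : ∀ (l : ZMod L) (j : ℕ), j < L / M →
      ((l = l - ((j * M : ℕ) : ZMod L)) ↔ j = 0) := by
    intro l j hj
    rw [eq_comm, sub_eq_self, ZMod.natCast_eq_zero_iff]
    constructor
    · intro hdvd
      have := Nat.eq_zero_of_dvd_of_lt hdvd (fact1 j hj)
      exact (Nat.mul_eq_zero.mp this).resolve_right hM0
    · rintro rfl; simp
  have fact3 : ∀ (l : ZMod L) (j : ℕ), j < L / M →
      (M : ℤ) ∣ ((l.val : ℤ) - ((l - ((j * M : ℕ) : ZMod L)).val : ℤ)) := by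
    intro l j hj
    rw [dvd_val_sub_iff L M hML]
    have : l - (l - ((j * M : ℕ) : ZMod L)) = ((j * M : ℕ) : ZMod L) := by ring
    rw [this, ZMod.val_cast_of_lt (fact1 j hj)]
    exact Int.natCast_dvd_natCast.mpr ⟨j, by ring⟩
  constructor
  · intro H l j hj
    have := H (l - ((j * M : ℕ) : ZMod L)) l
    rw [C0, if_pos (fact3 l j hj)] at this
    by_cases hjz : j = 0
    · subst hjz
      rw [if_pos ((fact2 l 0 hj).mpr rfl)] at this
      simpa using this.symm
    · rw [if_neg (fun hc => hjz ((fact2 l j hj).mp hc))] at this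
      rw [if_neg hjz]
      exact this.symm
  · intro H l₀ l
    rw [C0]
    by_cases hdvd : (M : ℤ) ∣ ((l.val : ℤ) - (l₀.val : ℤ))
    · have h1 : M ∣ (l - l₀).val := by
        have := (dvd_val_sub_iff L M hML l l₀).mp hdvd
        exact_mod_cast this
      set j : ℕ := (l - l₀).val / M with hjdef
      have hjlt : j < L / M := Nat.div_lt_div_of_lt_of_dvd hML (ZMod.val_lt _)
      have hkey : ((j * M : ℕ) : ZMod L) = l - l₀ := by
        rw [hjdef, Nat.div_mul_cancel h1, ZMod.natCast_val, ZMod.cast_id]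
      have hl₀ : l - ((j * M : ℕ) : ZMod L) = l₀ := by rw [hkey]; ring
      have := H l j hjlt
      rw [hl₀] at this
      rw [if_pos hdvd, this]
      congr 1
      rw [eq_iff_iff]
      constructor
      · intro hll
        apply (fact2 l j hjlt).mp
        rw [hl₀, ← hll]
      · intro hj0
        rw [← hl₀]
        exact (fact2 l j hjlt).mpr hj0
    · rw [if_neg hdvd, zero_mul, if_neg]
      intro hll
      exact hdvd (by rw [hll]; simp)

-- reindexing lemma: sum against character over full group collapses translates
lemma reindex_sum (L a M : ℕ) [NeZero L] (ha0 : a ≠ 0) (haL : a ∣ L)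
    (g h : ZMod L → ℂ) (j m : ℕ) :
    (∑ l : ZMod L, (∑ n : Fin (L / a),
        star (h (l - ((j * M : ℕ) : ZMod L) - (((n : ℕ) * a : ℕ) : ZMod L))) *
          g (l - (((n : ℕ) * a : ℕ) : ZMod L))) * ec a ((-(m : ℤ)) * (l.val : ℤ)))
      = ((L / a : ℕ) : ℂ) * ∑ l : ZMod L,
          star (h (l - ((j * M : ℕ) : ZMod L))) * g l * ec a ((-(m : ℤ)) * (l.val : ℤ)) := by
  have hswap : (∑ l : ZMod L, (∑ n : Fin (L / a),
        star (h (l - ((j * M : ℕ) : ZMod L) - (((n : ℕ) * a : ℕ) : ZMod L))) *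
          g (l - (((n : ℕ) * a : ℕ) : ZMod L))) * ec a ((-(m : ℤ)) * (l.val : ℤ)))
      = ∑ n : Fin (L / a), ∑ l : ZMod L,
          star (h (l - ((j * M : ℕ) : ZMod L) - (((n : ℕ) * a : ℕ) : ZMod L))) *
            g (l - (((n : ℕ) * a : ℕ) : ZMod L)) * ec a ((-(m : ℤ)) * (l.val : ℤ)) := by
    rw [← Finset.sum_comm]
    exact Finset.sum_congr rfl fun l _ => Finset.sum_mul _ _ _
  rw [hswap]
  have hinner : ∀ n : Fin (L / a),
      (∑ l : ZMod L,
          star (h (l - ((j * M : ℕ) : ZMod L) - (((n : ℕ) * a : ℕ) : ZMod L))) *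
            g (l - (((n : ℕ) * a : ℕ) : ZMod L)) * ec a ((-(m : ℤ)) * (l.val : ℤ)))
      = ∑ l : ZMod L,
          star (h (l - ((j * M : ℕ) : ZMod L))) * g l * ec a ((-(m : ℤ)) * (l.val : ℤ)) := by
    intro n
    rw [← Equiv.sum_comp (Equiv.addRight ((((n : ℕ) * a : ℕ) : ZMod L)))
      (fun l => star (h (l - ((j * M : ℕ) : ZMod L) - (((n : ℕ) * a : ℕ) : ZMod L))) *
          g (l - (((n : ℕ) * a : ℕ) : ZMod L)) * ec a ((-(m : ℤ)) * (l.val : ℤ)))]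
    apply Finset.sum_congr rfl
    intro l _
    simp only [Equiv.coe_addRight]
    have harg1 : l + (((n : ℕ) * a : ℕ) : ZMod L) - ((j * M : ℕ) : ZMod L)
        - (((n : ℕ) * a : ℕ) : ZMod L) = l - ((j * M : ℕ) : ZMod L) := by ring
    have harg2 : l + (((n : ℕ) * a : ℕ) : ZMod L) - (((n : ℕ) * a : ℕ) : ZMod L) = l := by
      ring
    rw [harg1, harg2, ec_val_add L a haL ha0 ((n : ℕ) * a) (-(m : ℤ)) l]
    have hone : ec a ((-(m : ℤ)) * (((n : ℕ) * a : ℕ) : ℤ)) = 1 := by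
      have : ((-(m : ℤ)) * (((n : ℕ) * a : ℕ) : ℤ)) = (a : ℤ) * (-(m : ℤ) * (n : ℕ)) := by
        push_cast; ring
      rw [this]
      exact ec_mul_self a ha0 _
    rw [hone, mul_one]
  rw [Finset.sum_congr rfl fun n _ => hinner n]
  rw [Finset.sum_const, Finset.card_univ, Fintype.card_fin, nsmul_eq_mul]

lemma step3 (L a M : ℕ) [NeZero L] (ha0 : a ≠ 0) (hM0 : M ≠ 0)
    (haL : a ∣ L) (hML : M ∣ L) (g h : ZMod L → ℂ) :
    (∀ l : ZMod L, ∀ j : ℕ, j < L / M →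
        (M : ℂ) * ∑ n : Fin (L / a),
            star (h (l - ((j * M : ℕ) : ZMod L) - (((n : ℕ) * a : ℕ) : ZMod L))) *
              g (l - (((n : ℕ) * a : ℕ) : ZMod L))
          = if j = 0 then 1 else 0)
    ↔ (∀ m : ℕ, m < a → ∀ j : ℕ, j < L / M →
        (M : ℂ) / (a : ℂ) * (∑ l : ZMod L,
            star (h (l - ((j * M : ℕ) : ZMod L))) * g l * ec a ((-(m : ℤ)) * (l.val : ℤ)))
          = if j = 0 ∧ m = 0 then 1 else 0) := by
  have hL : L ≠ 0 := NeZero.ne L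
  have hLC : (L : ℂ) ≠ 0 := Nat.cast_ne_zero.mpr hL
  have haC : (a : ℂ) ≠ 0 := Nat.cast_ne_zero.mpr ha0
  have hMC : (M : ℂ) ≠ 0 := Nat.cast_ne_zero.mpr hM0
  have hq0 : L / a ≠ 0 := by
    intro hq; exact hL (by rw [← Nat.div_mul_cancel haL, hq, zero_mul])
  have hqC : ((L / a : ℕ) : ℂ) ≠ 0 := Nat.cast_ne_zero.mpr hq0
  have hqcast : ((L / a : ℕ) : ℂ) = (L : ℂ) / (a : ℂ) := Nat.cast_div haL haC
  have hdvd_neg : ∀ m : ℕ, m < a → (((a : ℤ) ∣ (-(m : ℤ))) ↔ m = 0) := by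
    intro m hm
    rw [dvd_neg, Int.natCast_dvd_natCast]
    exact ⟨fun hdvd => Nat.eq_zero_of_dvd_of_lt hdvd hm, fun hm0 => hm0 ▸ dvd_zero a⟩
  constructor
  · intro H m hm j hj
    have hG : ∀ l : ZMod L,
        (∑ n : Fin (L / a),
            star (h (l - ((j * M : ℕ) : ZMod L) - (((n : ℕ) * a : ℕ) : ZMod L))) *
              g (l - (((n : ℕ) * a : ℕ) : ZMod L)))
        = (if j = 0 then 1 else 0) * (M : ℂ)⁻¹ := by
      intro l
      rw [eq_mul_inv_iff_mul_eq₀ hMC, mul_comm]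
      exact H l j hj
    have hT1 := reindex_sum L a M ha0 haL g h j m
    have hT2 : (∑ l : ZMod L, (∑ n : Fin (L / a),
        star (h (l - ((j * M : ℕ) : ZMod L) - (((n : ℕ) * a : ℕ) : ZMod L))) *
          g (l - (((n : ℕ) * a : ℕ) : ZMod L))) * ec a ((-(m : ℤ)) * (l.val : ℤ)))
        = (if j = 0 then 1 else 0) * (M : ℂ)⁻¹ * (if m = 0 then (L : ℂ) else 0) := by
      rw [Finset.sum_congr rfl fun l _ => by rw [hG l]]
      rw [← Finset.mul_sum, sum_ec_val L a haL (-(m : ℤ))]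
      rw [if_congr (hdvd_neg m hm) rfl rfl]
    rw [hT1] at hT2
    by_cases hcase : j = 0 ∧ m = 0
    · obtain ⟨hj0, hm0⟩ := hcase
      rw [if_pos hj0, if_pos hm0, hqcast] at hT2
      rw [if_pos (⟨hj0, hm0⟩ : j = 0 ∧ m = 0)]
      have hda : (a : ℂ) * ((L : ℂ) / (a : ℂ)) = (L : ℂ) := by field_simp
      have hmm' : (M : ℂ) * (M : ℂ)⁻¹ = 1 := mul_inv_cancel₀ hMC
      have h5 : (L : ℂ) * ((M : ℂ) * ∑ l : ZMod L,
          star (h (l - ((j * M : ℕ) : ZMod L))) * g l * ec a ((-(m : ℤ)) * (l.val : ℤ)))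
          = (L : ℂ) * (a : ℂ) := by
        linear_combination ((a : ℂ) * (M : ℂ)) * hT2
          - ((M : ℂ) * ∑ l : ZMod L,
              star (h (l - ((j * M : ℕ) : ZMod L))) * g l * ec a ((-(m : ℤ)) * (l.val : ℤ))) * hda
          + ((a : ℂ) * (L : ℂ)) * hmm'
      have h6 := mul_left_cancel₀ hLC h5
      rw [div_mul_eq_mul_div, h6, div_self haC]
    · rw [if_neg hcase]
      have hz : ((if j = 0 then (1 : ℂ) else 0) * (M : ℂ)⁻¹ * (if m = 0 then (L : ℂ) else 0)) = 0 := by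
        rcases not_and_or.mp hcase with hj0 | hm0
        · rw [if_neg hj0]; ring
        · rw [if_neg hm0]; ring
      rw [hz] at hT2
      have hF0 := (mul_eq_zero.mp hT2).resolve_left hqC
      rw [hF0, mul_zero]
  · intro H l j hj
    have hF : ∀ m : ℕ, m < a →
        (∑ l' : ZMod L,
            star (h (l' - ((j * M : ℕ) : ZMod L))) * g l' * ec a ((-(m : ℤ)) * (l'.val : ℤ)))
        = if j = 0 ∧ m = 0 then (a : ℂ) / (M : ℂ) else 0 := by
      intro m hm
      have hHm := H m hm j hj
      by_cases hcase : j = 0 ∧ m = 0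
      · rw [if_pos hcase] at hHm ⊢
        field_simp at hHm ⊢
        linear_combination hHm
      · rw [if_neg hcase] at hHm ⊢
        have := mul_eq_zero.mp hHm
        rcases this with hc | hres
        · exact absurd hc (div_ne_zero hMC haC)
        · exact hres
    -- the double sum U
    have hU1 : (∑ m ∈ Finset.range a, ec a ((m : ℤ) * (l.val : ℤ)) *
          (∑ l' : ZMod L,
            star (h (l' - ((j * M : ℕ) : ZMod L))) * g l' * ec a ((-(m : ℤ)) * (l'.val : ℤ))))
        = if j = 0 then (a : ℂ) / (M : ℂ) else 0 := by
      have hstep : ∀ m ∈ Finset.range a,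
          ec a ((m : ℤ) * (l.val : ℤ)) *
            (∑ l' : ZMod L,
              star (h (l' - ((j * M : ℕ) : ZMod L))) * g l' * ec a ((-(m : ℤ)) * (l'.val : ℤ)))
          = if m = 0 then (if j = 0 then (a : ℂ) / (M : ℂ) else 0) else 0 := by
        intro m hmr
        rw [hF m (Finset.mem_range.mp hmr)]
        by_cases hm0 : m = 0
        · subst hm0
          simp [ec_zero, and_true]
        · simp [hm0, and_false]
      rw [Finset.sum_congr rfl hstep, Finset.sum_ite_eq' (Finset.range a) 0]
      rw [if_pos (Finset.mem_range.mpr (Nat.pos_of_ne_zero ha0))]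
    have hU2 : (∑ m ∈ Finset.range a, ec a ((m : ℤ) * (l.val : ℤ)) *
          (∑ l' : ZMod L,
            star (h (l' - ((j * M : ℕ) : ZMod L))) * g l' * ec a ((-(m : ℤ)) * (l'.val : ℤ))))
        = (a : ℂ) * ∑ n : Fin (L / a),
            star (h (l - (((n : ℕ) * a : ℕ) : ZMod L) - ((j * M : ℕ) : ZMod L))) *
              g (l - (((n : ℕ) * a : ℕ) : ZMod L)) := by
      calc (∑ m ∈ Finset.range a, ec a ((m : ℤ) * (l.val : ℤ)) *
          (∑ l' : ZMod L,
            star (h (l' - ((j * M : ℕ) : ZMod L))) * g l' * ec a ((-(m : ℤ)) * (l'.val : ℤ))))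
          = ∑ m ∈ Finset.range a, ∑ l' : ZMod L,
              star (h (l' - ((j * M : ℕ) : ZMod L))) * g l' *
                ec a ((m : ℤ) * ((l.val : ℤ) - (l'.val : ℤ))) := by
            refine Finset.sum_congr rfl fun m _ => ?_
            rw [Finset.mul_sum]
            refine Finset.sum_congr rfl fun l' _ => ?_
            have : ec a ((m : ℤ) * (l.val : ℤ)) * ec a ((-(m : ℤ)) * (l'.val : ℤ))
                = ec a ((m : ℤ) * ((l.val : ℤ) - (l'.val : ℤ))) := by
              rw [← ec_add]; congr 1; ring
            rw [← this]; ring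
        _ = ∑ l' : ZMod L, ∑ m ∈ Finset.range a,
              star (h (l' - ((j * M : ℕ) : ZMod L))) * g l' *
                ec a ((m : ℤ) * ((l.val : ℤ) - (l'.val : ℤ))) := Finset.sum_comm
        _ = ∑ l' : ZMod L,
              (if (a : ℤ) ∣ ((l.val : ℤ) - (l'.val : ℤ)) then
                (a : ℂ) * (star (h (l' - ((j * M : ℕ) : ZMod L))) * g l') else 0) := by
            refine Finset.sum_congr rfl fun l' _ => ?_
            rw [← Finset.mul_sum, ec_sum a ha0]
            by_cases hdvd : (a : ℤ) ∣ ((l.val : ℤ) - (l'.val : ℤ))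
            · rw [if_pos hdvd, if_pos hdvd]; ring
            · rw [if_neg hdvd, if_neg hdvd, mul_zero]
        _ = ∑ n : Fin (L / a),
              (a : ℂ) * (star (h (l - (((n : ℕ) * a : ℕ) : ZMod L) - ((j * M : ℕ) : ZMod L))) *
                g (l - (((n : ℕ) * a : ℕ) : ZMod L))) :=
            coset_sum L a haL ha0 l
              (fun l' => (a : ℂ) * (star (h (l' - ((j * M : ℕ) : ZMod L))) * g l'))
        _ = (a : ℂ) * ∑ n : Fin (L / a),
              star (h (l - (((n : ℕ) * a : ℕ) : ZMod L) - ((j * M : ℕ) : ZMod L))) *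
                g (l - (((n : ℕ) * a : ℕ) : ZMod L)) := by
            rw [Finset.mul_sum]
    rw [hU2] at hU1
    have harg : ∀ n : Fin (L / a),
        l - (((n : ℕ) * a : ℕ) : ZMod L) - ((j * M : ℕ) : ZMod L)
          = l - ((j * M : ℕ) : ZMod L) - (((n : ℕ) * a : ℕ) : ZMod L) := by
      intro n; ring
    rw [Finset.sum_congr rfl fun n _ => by rw [harg n]] at hU1
    by_cases hj0 : j = 0
    · rw [if_pos hj0] at hU1
      rw [if_pos hj0]
      have h4 : (M : ℂ) * ((a : ℂ) / (M : ℂ)) = (a : ℂ) := by field_simp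
      have h5 : (a : ℂ) * ((M : ℂ) * ∑ n : Fin (L / a),
          star (h (l - ((j * M : ℕ) : ZMod L) - (((n : ℕ) * a : ℕ) : ZMod L))) *
            g (l - (((n : ℕ) * a : ℕ) : ZMod L))) = (a : ℂ) * 1 := by
        rw [mul_one]
        linear_combination (M : ℂ) * hU1 + h4
      exact mul_left_cancel₀ haC h5
    · rw [if_neg hj0] at hU1
      rw [if_neg hj0]
      rcases mul_eq_zero.mp hU1 with hc | hS
      · exact absurd hc haC
      · rw [hS, mul_zero]

lemma W_rw (L a M : ℕ) [NeZero L] (g h : ZMod L → ℂ) (m n : ℕ) :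
    ipL L h (fun l =>
        Complex.exp (2 * Real.pi * Complex.I * (m : ℂ) * (l.val : ℂ) / (a : ℂ)) *
          g (l - ((n * M : ℕ) : ZMod L)))
    = ∑ l : ZMod L, h l * ec a ((-(m : ℤ)) * (l.val : ℤ)) *
        star (g (l - ((n * M : ℕ) : ZMod L))) := by
  rw [ipL]
  refine Finset.sum_congr rfl fun l _ => ?_
  rw [exp_eq_ec, star_mul', ec_star, neg_mul]
  ring

lemma pm_lt (a : ℕ) (ha0 : a ≠ 0) (m : ℕ) : (a - m) % a < a :=
  Nat.mod_lt _ (Nat.pos_of_ne_zero ha0)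

lemma pm_zero_iff (a : ℕ) (ha0 : a ≠ 0) (m : ℕ) (hm : m < a) :
    ((a - m) % a = 0 ↔ m = 0) := by
  rcases Nat.eq_zero_or_pos m with hm0 | hm0
  · simp [hm0, Nat.mod_self]
  · have h1 : a - m < a := Nat.sub_lt (Nat.pos_of_ne_zero ha0) hm0
    rw [Nat.mod_eq_of_lt h1]
    omega

lemma pm_invol (a : ℕ) (ha0 : a ≠ 0) (m : ℕ) (hm : m < a) :
    (a - (a - m) % a) % a = m := by
  rcases Nat.eq_zero_or_pos m with hm0 | hm0
  · simp [hm0, Nat.mod_self]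
  · have h1 : a - m < a := Nat.sub_lt (Nat.pos_of_ne_zero ha0) hm0
    rw [Nat.mod_eq_of_lt h1]
    have h2 : a - (a - m) = m := by omega
    rw [h2, Nat.mod_eq_of_lt hm]

lemma pm_dvd (a : ℕ) (ha0 : a ≠ 0) (m : ℕ) (hm : m < a) :
    a ∣ (m + (a - m) % a) := by
  rcases Nat.eq_zero_or_pos m with hm0 | hm0
  · simp [hm0, Nat.mod_self]
  · have h1 : a - m < a := Nat.sub_lt (Nat.pos_of_ne_zero ha0) hm0
    rw [Nat.mod_eq_of_lt h1]
    have : m + (a - m) = a := by omega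
    rw [this]

lemma FW_rel (L a M : ℕ) [NeZero L] (ha0 : a ≠ 0) (hM0 : M ≠ 0)
    (haL : a ∣ L) (hML : M ∣ L) (g h : ZMod L → ℂ) (m j : ℕ) (hm : m < a)
    (hj : j < L / M) :
    (∑ l : ZMod L,
        star (h (l - ((j * M : ℕ) : ZMod L))) * g l * ec a ((-(m : ℤ)) * (l.val : ℤ)))
    = ec a ((-(m : ℤ)) * ((j * M : ℕ) : ℤ)) *
        star (∑ l : ZMod L, h l * ec a ((-(((a - m) % a : ℕ) : ℤ)) * (l.val : ℤ)) *
          star (g (l - (((L / M - j) % (L / M) * M : ℕ) : ZMod L)))) := by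
  have hL : L ≠ 0 := NeZero.ne L
  have hq : L / M ≠ 0 := by
    intro hq0; exact hL (by rw [← Nat.div_mul_cancel hML, hq0, zero_mul])
  set m' : ℕ := (a - m) % a with hm'
  set j' : ℕ := (L / M - j) % (L / M) with hj'
  -- compute star of the W-sum
  have hstarW : star (∑ l : ZMod L, h l * ec a ((-(m' : ℤ)) * (l.val : ℤ)) *
        star (g (l - ((j' * M : ℕ) : ZMod L))))
      = ∑ l : ZMod L, star (h l) * ec a ((m' : ℤ) * (l.val : ℤ)) *
          g (l - ((j' * M : ℕ) : ZMod L)) := by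
    rw [star_sum]
    refine Finset.sum_congr rfl fun l _ => ?_
    rw [star_mul', star_mul', ec_star, star_star,
      show -((-(m' : ℤ)) * (l.val : ℤ)) = (m' : ℤ) * (l.val : ℤ) from by ring]
  rw [hstarW, Finset.mul_sum]
  -- reindex the F-sum by l ↦ l + jM
  rw [← Equiv.sum_comp (Equiv.addRight (((j * M : ℕ) : ZMod L)))
    (fun l => star (h (l - ((j * M : ℕ) : ZMod L))) * g l * ec a ((-(m : ℤ)) * (l.val : ℤ)))]
  refine Finset.sum_congr rfl fun l _ => ?_
  simp only [Equiv.coe_addRight]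
  have harg : l + ((j * M : ℕ) : ZMod L) - ((j * M : ℕ) : ZMod L) = l := by ring
  rw [harg, ec_val_add L a haL ha0 (j * M) (-(m : ℤ)) l]
  -- match the g arguments
  have hgarg : l + ((j * M : ℕ) : ZMod L) = l - ((j' * M : ℕ) : ZMod L) := by
    have hsum : ((j * M : ℕ) : ZMod L) + ((j' * M : ℕ) : ZMod L) = 0 := by
      have : ((j * M + j' * M : ℕ) : ZMod L) = 0 := by
        rw [ZMod.natCast_eq_zero_iff]
        have : j * M + j' * M = (j + j') * M := by ring
        rw [this]
        obtain ⟨t, ht⟩ := pm_dvd (L / M) hq j hj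
        rw [ht]
        have : L / M * t * M = (L / M * M) * t := by ring
        rw [this, Nat.div_mul_cancel hML]
        exact Dvd.intro t rfl
      rw [← Nat.cast_add]
      exact this
    have : ((j' * M : ℕ) : ZMod L) = -((j * M : ℕ) : ZMod L) := by
      linear_combination (norm := ring_nf) hsum
    rw [this]
    ring
  rw [hgarg]
  -- match the characters: a ∣ m + m'
  have hchar : ec a ((-(m : ℤ)) * (l.val : ℤ)) = ec a ((m' : ℤ) * (l.val : ℤ)) := by
    apply ec_eq_of_dvd a ha0
    obtain ⟨t, ht⟩ := pm_dvd a ha0 m hm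
    refine ⟨-(t * (l.val : ℤ)), ?_⟩
    have hmm' : (m : ℤ) + (m' : ℤ) = (a : ℤ) * t := by exact_mod_cast ht
    linear_combination (-(l.val : ℤ)) * hmm'
  rw [hchar]
  ring

lemma step4 (L a M : ℕ) [NeZero L] (ha0 : a ≠ 0) (hM0 : M ≠ 0)
    (haL : a ∣ L) (hML : M ∣ L) (g h : ZMod L → ℂ) :
    (∀ m : ℕ, m < a → ∀ j : ℕ, j < L / M →
        (M : ℂ) / (a : ℂ) * (∑ l : ZMod L,
            star (h (l - ((j * M : ℕ) : ZMod L))) * g l * ec a ((-(m : ℤ)) * (l.val : ℤ)))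
          = if j = 0 ∧ m = 0 then 1 else 0)
    ↔ (∀ m : ℕ, m < a → ∀ n : ℕ, n < L / M →
        (M : ℂ) / (a : ℂ) *
          ipL L h (fun l =>
            Complex.exp (2 * Real.pi * Complex.I * (m : ℂ) * (l.val : ℂ) / (a : ℂ)) *
              g (l - ((n * M : ℕ) : ZMod L))) =
          if n = 0 ∧ m = 0 then 1 else 0) := by
  have hL : L ≠ 0 := NeZero.ne L
  have hq : L / M ≠ 0 := by
    intro hq0; exact hL (by rw [← Nat.div_mul_cancel hML, hq0, zero_mul])
  have haC : (a : ℂ) ≠ 0 := Nat.cast_ne_zero.mpr ha0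
  have hMC : (M : ℂ) ≠ 0 := Nat.cast_ne_zero.mpr hM0
  have hMA0 : (M : ℂ) / (a : ℂ) ≠ 0 := div_ne_zero hMC haC
  have hstarMA : star ((M : ℂ) / (a : ℂ)) = (M : ℂ) / (a : ℂ) := by
    rw [Complex.star_def, map_div₀, map_natCast, map_natCast]
  constructor
  · intro H m hm n hn
    rw [W_rw]
    have hm'lt : (a - m) % a < a := pm_lt a ha0 m
    have hj'lt : (L / M - n) % (L / M) < L / M := pm_lt (L / M) hq n
    have hrel := FW_rel L a M ha0 hM0 haL hML g h ((a - m) % a) ((L / M - n) % (L / M))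
      hm'lt hj'lt
    rw [pm_invol a ha0 m hm, pm_invol (L / M) hq n hn] at hrel
    have hH := H ((a - m) % a) hm'lt ((L / M - n) % (L / M)) hj'lt
    rw [hrel] at hH
    rw [if_congr (and_congr (pm_zero_iff (L / M) hq n hn) (pm_zero_iff a ha0 m hm))
      rfl rfl] at hH
    by_cases hc : n = 0 ∧ m = 0
    · rw [if_pos hc] at hH ⊢
      have hm'0 : (a - m) % a = 0 := (pm_zero_iff a ha0 m hm).mpr hc.2
      rw [hm'0] at hH
      have hc0 : ec a ((-((0 : ℕ) : ℤ)) * (((L / M - n) % (L / M) * M : ℕ) : ℤ)) = 1 := by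
        rw [show (-((0 : ℕ) : ℤ)) * (((L / M - n) % (L / M) * M : ℕ) : ℤ) = 0 by push_cast; ring]
        exact ec_zero a
      rw [hc0, one_mul] at hH
      calc (M : ℂ) / (a : ℂ) * (∑ l : ZMod L, h l * ec a ((-(m : ℤ)) * (l.val : ℤ)) *
              star (g (l - ((n * M : ℕ) : ZMod L))))
          = star ((M : ℂ) / (a : ℂ) * star (∑ l : ZMod L, h l * ec a ((-(m : ℤ)) * (l.val : ℤ)) *
              star (g (l - ((n * M : ℕ) : ZMod L))))) := by
            rw [star_mul', hstarMA, star_star]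
        _ = star (1 : ℂ) := by rw [hH]
        _ = 1 := star_one ℂ
    · rw [if_neg hc] at hH ⊢
      rcases mul_eq_zero.mp hH with h1 | h1
      · exact absurd h1 hMA0
      rcases mul_eq_zero.mp h1 with h2 | h2
      · exact absurd h2 (by rw [ec]; exact Complex.exp_ne_zero _)
      have hW0 : (∑ l : ZMod L, h l * ec a ((-(m : ℤ)) * (l.val : ℤ)) *
          star (g (l - ((n * M : ℕ) : ZMod L)))) = 0 := by
        rw [← star_star (∑ l : ZMod L, h l * ec a ((-(m : ℤ)) * (l.val : ℤ)) *
          star (g (l - ((n * M : ℕ) : ZMod L)))), h2, star_zero]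
      rw [hW0, mul_zero]
  · intro H m hm j hj
    have hrel := FW_rel L a M ha0 hM0 haL hML g h m j hm hj
    have hm'lt : (a - m) % a < a := pm_lt a ha0 m
    have hj'lt : (L / M - j) % (L / M) < L / M := pm_lt (L / M) hq j
    have hH := H ((a - m) % a) hm'lt ((L / M - j) % (L / M)) hj'lt
    rw [W_rw] at hH
    rw [if_congr (and_congr (pm_zero_iff (L / M) hq j hj) (pm_zero_iff a ha0 m hm))
      rfl rfl] at hH
    rw [hrel]
    by_cases hc : j = 0 ∧ m = 0
    · rw [if_pos hc] at hH ⊢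
      have hc0 : ec a ((-(m : ℤ)) * ((j * M : ℕ) : ℤ)) = 1 := by
        rw [show (-(m : ℤ)) * ((j * M : ℕ) : ℤ) = 0 by rw [hc.2]; push_cast; ring]
        exact ec_zero a
      rw [hc0, one_mul]
      calc (M : ℂ) / (a : ℂ) * star (∑ l : ZMod L,
              h l * ec a ((-(((a - m) % a : ℕ) : ℤ)) * (l.val : ℤ)) *
                star (g (l - (((L / M - j) % (L / M) * M : ℕ) : ZMod L))))
          = star ((M : ℂ) / (a : ℂ) * (∑ l : ZMod L,
              h l * ec a ((-(((a - m) % a : ℕ) : ℤ)) * (l.val : ℤ)) *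
                star (g (l - (((L / M - j) % (L / M) * M : ℕ) : ZMod L))))) := by
            rw [star_mul', hstarMA]
        _ = star (1 : ℂ) := by rw [hH]
        _ = 1 := star_one ℂ
    · rw [if_neg hc] at hH ⊢
      rcases mul_eq_zero.mp hH with h1 | h1
      · exact absurd h1 hMA0
      rw [h1, star_zero, mul_zero, mul_zero]


/-- Wexler–Raz: if `G(g,a,M)` is a Gabor frame on `ℂ^L` (the atoms span
`ℂ^L`), then `h` is a dual window for `g` iff `(g,h)` satisfies the Wexler–Raz
equations `(M/a)·⟨h, e^{2πim·/a}·T_{nM} g⟩ = δ[n]δ[m]` for `m = 0,…,a-1`,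
`n = 0,…,L/M-1`. -/
theorem dual_window_iff_wexler_raz
    (L a M : ℕ) [NeZero L] (ha : 0 < a) (hM : 0 < M) (haL : a ∣ L) (hML : M ∣ L)
    (g h : ZMod L → ℂ)
    (hframe : Submodule.span ℂ
      (Set.range fun p : Fin M × Fin (L / a) =>
        gaborAtom L M g p.1 ((p.2 : ℕ) * a)) = ⊤) :
    (∀ f : ZMod L → ℂ, ∀ l : ZMod L,
        f l = ∑ n : Fin (L / a), ∑ m : Fin M,
          ipL L f (gaborAtom L M h m ((n : ℕ) * a)) *
            gaborAtom L M g m ((n : ℕ) * a) l)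
    ↔ (∀ m : ℕ, m < a → ∀ n : ℕ, n < L / M →
        (M : ℂ) / (a : ℂ) *
          ipL L h (fun l =>
            Complex.exp (2 * Real.pi * Complex.I * (m : ℂ) * (l.val : ℂ) / (a : ℂ)) *
              g (l - ((n * M : ℕ) : ZMod L))) =
          if n = 0 ∧ m = 0 then 1 else 0) := by
  rw [step1 L a M g h, step2 L a M hM.ne' hML g h,
    step3 L a M ha.ne' hM.ne' haL hML g h,
    step4 L a M ha.ne' hM.ne' haL hML g h]
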